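/- Let p be a point sphere complex and γ ⊂ ℝ^{4,2} a circle, i.e. a 3-dimensional subspace orthogonal to p on which the induced form has signature (2,1). Let m, n ∈ γ be linearly independent isotropic vectors (two distinct points of the circle). Then ⟨m,n⟩ ≠ 0, and there exists a nonzero isotropic vector s ∈ ℝ^{4,2} with ⟨s,m⟩ = ⟨s,n⟩ = 0 and s + ⟨s,p⟩p ∈ γ — i.e. an oriented sphere containing both points m and n that intersects the circle orthogonally. Hence any two contact elements that intersect a circle orthogonally at different points share, up to orientation, a common sphere. -/
import Mathlib


noncomputable section

/-- The symmetric bilinear form of signature (4,2) on ℝ⁶, modelling ℝ^{4,2}. -/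
def B (x y : Fin 6 → ℝ) : ℝ :=
  x 0 * y 0 + x 1 * y 1 + x 2 * y 2 + x 3 * y 3 - x 4 * y 4 - x 5 * y 5

/-- The induced form on the subspace `W` has signature (2,1) (it admits a
spanning pseudo-orthonormal triple of Gram matrix diag(1,1,-1)); in particular
`W` is 3-dimensional. -/
def SigTwoOne (W : Submodule ℝ (Fin 6 → ℝ)) : Prop :=
  ∃ u v w : Fin 6 → ℝ, Submodule.span ℝ ({u, v, w} : Set (Fin 6 → ℝ)) = W ∧
    B u u = 1 ∧ B v v = 1 ∧ B w w = -1 ∧ B u v = 0 ∧ B u w = 0 ∧ B v w = 0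

lemma Bsymm (x y : Fin 6 → ℝ) : B x y = B y x := by unfold B; ring

lemma Badd_left (x y z : Fin 6 → ℝ) : B (x + y) z = B x z + B y z := by
  simp [B, Pi.add_apply]; ring

lemma Bsmul_left (a : ℝ) (x y : Fin 6 → ℝ) : B (a • x) y = a * B x y := by
  simp [B, Pi.smul_apply, smul_eq_mul]; ring

lemma Badd_right (x y z : Fin 6 → ℝ) : B x (y + z) = B x y + B x z := by
  simp [B, Pi.add_apply]; ring

lemma Bsmul_right (a : ℝ) (x y : Fin 6 → ℝ) : B x (a • y) = a * B x y := by
  simp [B, Pi.smul_apply, smul_eq_mul]; ring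

lemma Bexpand (u v w : Fin 6 → ℝ)
    (huu : B u u = 1) (hvv : B v v = 1) (hww : B w w = -1)
    (huv : B u v = 0) (huw : B u w = 0) (hvw : B v w = 0)
    (a₀ a₁ a₂ b₀ b₁ b₂ : ℝ) :
    B (a₀ • u + a₁ • v + a₂ • w) (b₀ • u + b₁ • v + b₂ • w)
      = a₀ * b₀ + a₁ * b₁ - a₂ * b₂ := by
  simp only [Badd_left, Badd_right, Bsmul_left, Bsmul_right, huu, hvv, hww, huv, huw, hvw,
    Bsymm v u, Bsymm w u, Bsymm w v, huv, huw, hvw]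
  ring


set_option maxHeartbeats 1000000 in
/-- For two distinct points `m, n` of a circle `γ` one has
`⟨m,n⟩ ≠ 0`, and there is an oriented sphere `s` containing both points that
intersects the circle orthogonally (`s + ⟨s,p⟩p ∈ γ`); hence any two contact
elements intersecting a circle orthogonally at different points share, up to
orientation, a common sphere. -/
theorem stmt_15 (p : Fin 6 → ℝ) (hp : B p p = -1)
    (γ : Submodule ℝ (Fin 6 → ℝ)) (hγp : ∀ x ∈ γ, B x p = 0)
    (hγdim : Module.finrank ℝ γ = 3) (hγsig : SigTwoOne γ)
    (m n : Fin 6 → ℝ) (hmγ : m ∈ γ) (hnγ : n ∈ γ)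
    (hm : m ≠ 0) (im : B m m = 0) (hn : n ≠ 0) (in0 : B n n = 0)
    (hind : LinearIndependent ℝ ![m, n]) :
    B m n ≠ 0 ∧
    ∃ s : Fin 6 → ℝ, s ≠ 0 ∧ B s s = 0 ∧ B s m = 0 ∧ B s n = 0 ∧
      s + B s p • p ∈ γ := by
  obtain ⟨u, v, w, hspan, huu, hvv, hww, huv, huw, hvw⟩ := hγsig
  -- decompose m and n in the spanning set
  have hm' : m ∈ Submodule.span ℝ ({u, v, w} : Set (Fin 6 → ℝ)) := hspan ▸ hmγ
  have hn' : n ∈ Submodule.span ℝ ({u, v, w} : Set (Fin 6 → ℝ)) := hspan ▸ hnγ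
  rw [show ({u, v, w} : Set (Fin 6 → ℝ)) = insert u {v, w} from rfl,
    Submodule.mem_span_insert] at hm' hn'
  obtain ⟨a₀, z, hz, hmz⟩ := hm'
  obtain ⟨b₀, z', hz', hnz⟩ := hn'
  rw [Submodule.mem_span_pair] at hz hz'
  obtain ⟨a₁, a₂, hz⟩ := hz
  obtain ⟨b₁, b₂, hz'⟩ := hz'
  have hmeq : m = a₀ • u + a₁ • v + a₂ • w := by rw [hmz, ← hz]; module
  have hneq : n = b₀ • u + b₁ • v + b₂ • w := by rw [hnz, ← hz']; module
  have Bex := Bexpand u v w huu hvv hww huv huw hvw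
  have imm : a₀ * a₀ + a₁ * a₁ - a₂ * a₂ = 0 := by
    have := Bex a₀ a₁ a₂ a₀ a₁ a₂; rw [← hmeq] at this; linarith [im]
  have inn : b₀ * b₀ + b₁ * b₁ - b₂ * b₂ = 0 := by
    have := Bex b₀ b₁ b₂ b₀ b₁ b₂; rw [← hneq] at this; linarith [in0]
  have hmn : B m n = a₀ * b₀ + a₁ * b₁ - a₂ * b₂ := by
    rw [hmeq, hneq]; exact Bex _ _ _ _ _ _
  -- B m n ≠ 0
  have hμ : B m n ≠ 0 := by
    intro h0
    have hd : a₀ * b₀ + a₁ * b₁ - a₂ * b₂ = 0 := by rw [← hmn]; exact h0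
    have e2sq : (a₀ * b₁ - a₁ * b₀) ^ 2 = 0 := by
      linear_combination (b₀*b₀+b₁*b₁) * imm + a₂*a₂ * inn - (a₂*b₂ + a₀*b₀ + a₁*b₁) * hd
    have e2 : a₀ * b₁ - a₁ * b₀ = 0 := by
      have := sq_eq_zero_iff.mp e2sq; linarith
    have hsum : (a₁*b₂ - a₂*b₁) ^ 2 + (a₂*b₀ - a₀*b₂) ^ 2 - (a₀*b₁ - a₁*b₀) ^ 2 = 0 := by
      linear_combination (a₀*b₀+a₁*b₁-a₂*b₂) * hd - (b₀*b₀+b₁*b₁-b₂*b₂) * imm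
    have h01 : (a₁*b₂ - a₂*b₁) ^ 2 + (a₂*b₀ - a₀*b₂) ^ 2 = 0 := by
      linear_combination hsum + (a₀*b₁ - a₁*b₀) * e2
    have e0 : a₁ * b₂ - a₂ * b₁ = 0 := by
      have := (add_eq_zero_iff_of_nonneg (sq_nonneg _) (sq_nonneg _)).mp h01
      exact sq_eq_zero_iff.mp this.1
    have e1 : a₂ * b₀ - a₀ * b₂ = 0 := by
      have := (add_eq_zero_iff_of_nonneg (sq_nonneg _) (sq_nonneg _)).mp h01
      exact sq_eq_zero_iff.mp this.2
    have hanz : ¬ (a₀ = 0 ∧ a₁ = 0 ∧ a₂ = 0) := by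
      rintro ⟨h0, h1, h2⟩
      apply hm
      rw [hmeq, h0, h1, h2]; simp
    have pair := LinearIndependent.pair_iff.1 hind
    rcases (by tauto : a₀ ≠ 0 ∨ a₁ ≠ 0 ∨ a₂ ≠ 0) with ha | ha | ha
    · have key : b₀ • m + (-a₀) • n = 0 := by
        rw [hmeq, hneq]; match_scalars <;> linarith
      exact ha (neg_eq_zero.mp (pair b₀ (-a₀) key).2)
    · have key : b₁ • m + (-a₁) • n = 0 := by
        rw [hmeq, hneq]; match_scalars <;> linarith
      exact ha (neg_eq_zero.mp (pair b₁ (-a₁) key).2)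
    · have key : b₂ • m + (-a₂) • n = 0 := by
        rw [hmeq, hneq]; match_scalars <;> linarith
      exact ha (neg_eq_zero.mp (pair b₂ (-a₂) key).2)
  refine ⟨hμ, ?_⟩
  obtain ⟨e₀, he₀⟩ : ∃ x : ℝ, x = a₁ * b₂ - a₂ * b₁ := ⟨_, rfl⟩
  obtain ⟨e₁, he₁⟩ : ∃ x : ℝ, x = a₂ * b₀ - a₀ * b₂ := ⟨_, rfl⟩
  obtain ⟨e₂, he₂⟩ : ∃ x : ℝ, x = a₀ * b₁ - a₁ * b₀ := ⟨_, rfl⟩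
  obtain ⟨g, hg⟩ : ∃ g : Fin 6 → ℝ, g = e₀ • u + e₁ • v + (-e₂) • w := ⟨_, rfl⟩
  have hgγ : g ∈ γ := by
    rw [hg, ← hspan]
    refine Submodule.add_mem _ (Submodule.add_mem _ ?_ ?_) ?_ <;>
      exact Submodule.smul_mem _ _ (Submodule.subset_span (by simp))
  have hgp : B g p = 0 := hγp g hgγ
  have hmp : B m p = 0 := hγp m hmγ
  have hnp : B n p = 0 := hγp n hnγ
  have hgg : B g g = B m n * B m n := by
    rw [hg, Bex, hmn, he₀, he₁, he₂]
    linear_combination (-(b₀ * b₀ + b₁ * b₁ - b₂ * b₂)) * imm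
  have hgm : B g m = 0 := by rw [hg, hmeq, Bex, he₀, he₁, he₂]; ring
  have hgn : B g n = 0 := by rw [hg, hneq, Bex, he₀, he₁, he₂]; ring
  have hBsp : B (g + B m n • p) p = -(B m n) := by
    rw [Badd_left, Bsmul_left, hgp, hp]; ring
  refine ⟨g + B m n • p, ?_, ?_, ?_, ?_, ?_⟩
  · intro h0
    rw [h0] at hBsp
    apply hμ
    have : B 0 p = 0 := by simp [B]
    linarith [hBsp, this]
  · simp only [Badd_left, Badd_right, Bsmul_left, Bsmul_right, hgg, hp, Bsymm p g, hgp]; ring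
  · rw [Badd_left, Bsmul_left, hgm, Bsymm p m, hmp]; ring
  · rw [Badd_left, Bsmul_left, hgn, Bsymm p n, hnp]; ring
  · rw [hBsp]
    have : g + B m n • p + (-(B m n)) • p = g := by module
    rw [this]; exact hgγ
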